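/- Two-dimensional Minkowski spacetime ℝ²₁ is regular: if p ≤ q, p ≠ q, and τ(p,q) = 0 (p and q are null related), then the straight segment from p to q is the unique maximizer from p to q and it is a null curve; consequently if a maximizer from x to z has τ(x,z) > 0 then x ≪ z via a timelike straight segment. In particular, if x ≪ y, y ≤ z, τ(y,z) = 0 and y ≠ z, then τ(x,y) < τ(x,z). -/

import Mathlib

open Set

/-- A Lorentzian pre-length space: a set `X` with an extended time separation
function `ell : X × X → {-∞} ∪ [0,∞]` (modelled as `EReal` whose values are either
`⊥ = -∞` or nonnegative) satisfying the reverse triangle inequality (with the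
convention `-∞ + ∞ = -∞`, which is `EReal` addition) and `ell x x ≥ 0`. -/
structure LPLS (X : Type*) where
  ell : X → X → EReal
  range_cond : ∀ x y, ell x y = ⊥ ∨ 0 ≤ ell x y
  rev_tri : ∀ x y z, ell x y + ell y z ≤ ell x z
  refl_nonneg : ∀ x, 0 ≤ ell x x

namespace LPLS

variable {X : Type*}

/-- The causal relation `x ≤ y` iff `ℓ(x,y) ≥ 0`. -/
def causal (L : LPLS X) (x y : X) : Prop := 0 ≤ L.ell x y

/-- The chronological (timelike) relation `x ≪ y` iff `ℓ(x,y) > 0`. -/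
def chron (L : LPLS X) (x y : X) : Prop := 0 < L.ell x y

/-- The time separation function `τ = max(0, ℓ)`. -/
noncomputable def tau (L : LPLS X) (x y : X) : EReal := max 0 (L.ell x y)

/-- The chronological future `I⁺(x)`. -/
def Iplus (L : LPLS X) (x : X) : Set X := {z | L.chron x z}

/-- The chronological past `I⁻(x)`. -/
def Iminus (L : LPLS X) (x : X) : Set X := {z | L.chron z x}

/-- A causal curve on `[a,b]`: continuous and totally ordered by `≤`. -/
def IsCausalCurve [TopologicalSpace X] (L : LPLS X) (γ : ℝ → X) (a b : ℝ) : Prop :=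
  a ≤ b ∧ ContinuousOn γ (Icc a b) ∧
    ∀ ⦃s t : ℝ⦄, s ∈ Icc a b → t ∈ Icc a b → s < t → L.causal (γ s) (γ t)

/-- A timelike curve on `[a,b]`: continuous and totally ordered by `≪`. -/
def IsTimelikeCurve [TopologicalSpace X] (L : LPLS X) (γ : ℝ → X) (a b : ℝ) : Prop :=
  a ≤ b ∧ ContinuousOn γ (Icc a b) ∧
    ∀ ⦃s t : ℝ⦄, s ∈ Icc a b → t ∈ Icc a b → s < t → L.chron (γ s) (γ t)

/-- A curve is null on `[a,b]` if no two of its points are chronologically related. -/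
def IsNullOn (L : LPLS X) (γ : ℝ → X) (a b : ℝ) : Prop :=
  ∀ ⦃s t : ℝ⦄, s ∈ Icc a b → t ∈ Icc a b → s < t → ¬ L.chron (γ s) (γ t)

/-- The `τ`-length of a curve on `[a,b]`:
`L_τ(γ) = inf { Σ τ(γ(t_{i-1}), γ(t_i)) : a = t₀ < t₁ < … < t_N = b }`. -/
noncomputable def len (L : LPLS X) (γ : ℝ → X) (a b : ℝ) : EReal :=
  ⨅ (N : ℕ) (t : Fin (N + 1) → ℝ) (_ : StrictMono t) (_ : t 0 = a)
      (_ : t (Fin.last N) = b),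
    ∑ i : Fin N, L.tau (γ (t i.castSucc)) (γ (t i.succ))

/-- A (causal) maximizer: a causal curve whose length realizes the time separation
of its endpoints. -/
def IsMaximizer [TopologicalSpace X] (L : LPLS X) (γ : ℝ → X) (a b : ℝ) : Prop :=
  L.IsCausalCurve γ a b ∧ L.len γ a b = L.tau (γ a) (γ b)

/-- Regularity: every causal maximizer is either timelike or null. -/
def Regular [TopologicalSpace X] (L : LPLS X) : Prop :=
  ∀ (γ : ℝ → X) (a b : ℝ), a < b → L.IsMaximizer γ a b →
    L.IsTimelikeCurve γ a b ∨ L.IsNullOn γ a b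

/-- The topology is finer than the chronological topology: all `I±(x)` are open. -/
def ChronOpen [TopologicalSpace X] (L : LPLS X) : Prop :=
  ∀ x : X, IsOpen (L.Iplus x) ∧ IsOpen (L.Iminus x)

/-- Locally distinguishing: distinct points are distinguished by their futures or
pasts within every common neighbourhood. -/
def LocallyDistinguishing [TopologicalSpace X] (L : LPLS X) : Prop :=
  ∀ ⦃x y : X⦄, x ≠ y → ∀ U : Set X, U ∈ nhds x → U ∈ nhds y →
    L.Iplus x ∩ U ≠ L.Iplus y ∩ U ∨ L.Iminus x ∩ U ≠ L.Iminus y ∩ U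

/-- Not locally timelike isolating: every neighbourhood of every point meets its
chronological future and past. -/
def NotLocallyIsolating [TopologicalSpace X] (L : LPLS X) : Prop :=
  ∀ x : X, ∀ U ∈ nhds x, (L.Iplus x ∩ U).Nonempty ∧ (L.Iminus x ∩ U).Nonempty

/-- The push-up property. -/
def PushUp (L : LPLS X) : Prop :=
  (∀ ⦃x y z : X⦄, L.chron x y → L.causal y z → L.chron x z) ∧
  (∀ ⦃x y z : X⦄, L.causal x y → L.chron y z → L.chron x z)

end LPLS

/-- The causal relation of two-dimensional Minkowski spacetime `ℝ²₁` (with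
bilinear form `-t₁t₂ + x₁x₂`): `p ≤ q` iff `Δt ≥ 0` and `Δt² ≥ Δx²`. -/
def mcausal (p q : ℝ × ℝ) : Prop :=
  0 ≤ q.1 - p.1 ∧ (q.2 - p.2) ^ 2 ≤ (q.1 - p.1) ^ 2

/-- The chronological relation of `ℝ²₁`: `p ≪ q` iff `Δt > 0` and `Δt² > Δx²`. -/
def mchron (p q : ℝ × ℝ) : Prop :=
  0 < q.1 - p.1 ∧ (q.2 - p.2) ^ 2 < (q.1 - p.1) ^ 2

open Classical in
/-- The time separation of `ℝ²₁`: `τ(p,q) = √(Δt² - Δx²)` for `p ≤ q`, else `0`. -/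
noncomputable def mtau (p q : ℝ × ℝ) : ℝ :=
  if mcausal p q then Real.sqrt ((q.1 - p.1) ^ 2 - (q.2 - p.2) ^ 2) else 0

open Classical in
/-- The extended time separation of `ℝ²₁` as an `EReal`-valued function. -/
noncomputable def mell (p q : ℝ × ℝ) : EReal :=
  if mcausal p q then ((Real.sqrt ((q.1 - p.1) ^ 2 - (q.2 - p.2) ^ 2) : ℝ) : EReal) else ⊥


section Stmt8Helpers

private lemma seg_def (p q : ℝ × ℝ) (s : ℝ) :
    p + s • (q - p) = (p.1 + s * (q.1 - p.1), p.2 + s * (q.2 - p.2)) := rfl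

private lemma mell_nonneg_iff (p q : ℝ × ℝ) : 0 ≤ mell p q ↔ mcausal p q := by
  unfold mell
  split
  · next h => simpa [h] using (by exact_mod_cast Real.sqrt_nonneg ((q.1-p.1)^2 - (q.2-p.2)^2) :
      (0:EReal) ≤ ((Real.sqrt ((q.1-p.1)^2 - (q.2-p.2)^2) : ℝ) : EReal))
  · next h => simpa using h

private lemma mell_pos_iff (p q : ℝ × ℝ) : 0 < mell p q ↔ mchron p q := by
  unfold mell
  split
  · next h =>
    rw [show ((0:EReal) < ((Real.sqrt ((q.1-p.1)^2 - (q.2-p.2)^2) : ℝ) : EReal)) ↔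
        (0:ℝ) < Real.sqrt ((q.1-p.1)^2 - (q.2-p.2)^2) from by exact_mod_cast Iff.rfl,
      Real.sqrt_pos]
    constructor
    · intro hpos
      refine ⟨?_, by linarith⟩
      nlinarith [sq_nonneg (q.2 - p.2), h.1]
    · intro hc; linarith [hc.2]
  · next h =>
    constructor
    · intro h'; exact absurd h' (by simp)
    · intro hc; exact absurd ⟨hc.1.le, hc.2.le⟩ h

private lemma mell_null {p q : ℝ × ℝ} (h : mell p q = 0) :
    mcausal p q ∧ (q.2 - p.2) ^ 2 = (q.1 - p.1) ^ 2 := by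
  unfold mell at h
  split at h
  · next hc =>
    have h' : Real.sqrt ((q.1-p.1)^2 - (q.2-p.2)^2) = 0 := by exact_mod_cast h
    have h2 := Real.sqrt_eq_zero'.mp h'
    exact ⟨hc, by linarith [hc.2]⟩
  · exact absurd h (by simp)

private lemma len_nonneg {X : Type*} (L : LPLS X) (γ : ℝ → X) (a b : ℝ) :
    0 ≤ L.len γ a b := by
  unfold LPLS.len
  refine le_iInf fun N => le_iInf fun t => le_iInf fun _ => le_iInf fun _ => le_iInf fun _ => ?_
  exact Finset.sum_nonneg fun i _ => le_max_left 0 _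

private lemma len_le_tau {X : Type*} (L : LPLS X) (γ : ℝ → X) (a b : ℝ) (hab : a < b) :
    L.len γ a b ≤ L.tau (γ a) (γ b) := by
  unfold LPLS.len
  have hmono : StrictMono (![a, b] : Fin 2 → ℝ) := by
    rw [Fin.strictMono_iff_lt_succ]
    intro i; fin_cases i; simpa using hab
  refine iInf_le_of_le 1 (iInf_le_of_le ![a, b] (iInf_le_of_le hmono
    (iInf_le_of_le (by simp) (iInf_le_of_le (by simp [Fin.last]) (le_of_eq ?_)))))
  simp [Fin.sum_univ_one]

private lemma ereal_left_zero {a b : EReal} (ha : 0 ≤ a) (hb : 0 ≤ b) (h : a + b ≤ 0) :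
    a = 0 :=
  le_antisymm (by calc a = a + 0 := (add_zero a).symm
                  _ ≤ a + b := add_le_add_right hb a
                  _ ≤ 0 := h) ha

private lemma ereal_right_zero {a b : EReal} (ha : 0 ≤ a) (hb : 0 ≤ b) (h : a + b ≤ 0) :
    b = 0 :=
  le_antisymm (by calc b = 0 + b := (zero_add b).symm
                  _ ≤ a + b := add_le_add_left ha b
                  _ ≤ 0 := h) hb

private lemma null_mid {A B C D : ℝ} (h1 : B ^ 2 = A ^ 2) (h2 : D ^ 2 = C ^ 2)
    (h3 : (B + D) ^ 2 = (A + C) ^ 2) : B * (A + C) = A * (B + D) := by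
  have h4 : A * C = B * D := by linear_combination (h1 + h2 - h3) / 2
  have h5 : (A * D - B * C) ^ 2 = 0 := by
    linear_combination (-(D^2)) * h1 - B^2 * h2 - 2 * B * D * h4
  have h6 : A * D = B * C := by
    have := pow_eq_zero_iff (n := 2) (by norm_num) |>.mp h5
    linarith
  linear_combination -h6

end Stmt8Helpers

set_option maxHeartbeats 1000000

/-- `ℝ²₁` is regular.  (a) If `p ≤ q`, `p ≠ q` and `τ(p,q) = 0`
(null related) then the straight segment from `p` to `q` is a null maximizer and
any maximizer from `p` to `q` runs along this segment and is null (uniqueness).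
(b) Consequently a maximizer from `x` to `z` with `τ(x,z) > 0` gives `x ≪ z`
via a timelike straight segment.  (c) In particular, if `x ≪ y`, `y ≤ z`,
`τ(y,z) = 0` and `y ≠ z`, then `τ(x,y) < τ(x,z)`. -/
theorem stmt8 (L : LPLS (ℝ × ℝ)) (hL : ∀ p q, L.ell p q = mell p q) :
    (∀ p q : ℝ × ℝ, mcausal p q → p ≠ q → mtau p q = 0 →
      (L.IsMaximizer (fun s => p + s • (q - p)) 0 1 ∧
        L.IsNullOn (fun s => p + s • (q - p)) 0 1) ∧
      (∀ γ : ℝ → ℝ × ℝ, L.IsMaximizer γ 0 1 → γ 0 = p → γ 1 = q →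
        (∀ s ∈ Set.Icc (0:ℝ) 1, ∃ u ∈ Set.Icc (0:ℝ) 1, γ s = p + u • (q - p)) ∧
        L.IsNullOn γ 0 1)) ∧
    (∀ x z : ℝ × ℝ, ∀ γ : ℝ → ℝ × ℝ, L.IsMaximizer γ 0 1 → γ 0 = x → γ 1 = z →
      0 < L.tau x z → mchron x z ∧
        ∀ s t : ℝ, 0 ≤ s → s < t → t ≤ 1 →
          mchron (x + s • (z - x)) (x + t • (z - x))) ∧
    (∀ x y z : ℝ × ℝ, mchron x y → mcausal y z → mtau y z = 0 → y ≠ z →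
      mtau x y < mtau x z) := by
  have hcausal : ∀ a b : ℝ × ℝ, L.causal a b ↔ mcausal a b := fun a b => by
    rw [LPLS.causal, hL]; exact mell_nonneg_iff a b
  have hchron : ∀ a b : ℝ × ℝ, L.chron a b ↔ mchron a b := fun a b => by
    rw [LPLS.chron, hL]; exact mell_pos_iff a b
  refine ⟨?_, ?_, ?_⟩
  · -- part (a)
    intro p q hpq hne h0
    have hsq : (q.2 - p.2) ^ 2 = (q.1 - p.1) ^ 2 := by
      unfold mtau at h0
      rw [if_pos hpq] at h0
      have h2 := Real.sqrt_eq_zero'.mp h0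
      linarith [hpq.2]
    have ht : 0 < q.1 - p.1 := by
      rcases lt_or_eq_of_le hpq.1 with h | h
      · exact h
      · exfalso
        apply hne
        have hx2 : (q.2 - p.2) ^ 2 = 0 := by rw [hsq, ← h]; ring
        have hx : q.2 - p.2 = 0 := pow_eq_zero_iff (n := 2) (by norm_num) |>.mp hx2
        exact Prod.ext_iff.mpr ⟨by linarith, by linarith⟩
    have hell0 : L.ell p q = 0 := by
      rw [hL]
      unfold mell
      rw [if_pos hpq, show (q.1 - p.1) ^ 2 - (q.2 - p.2) ^ 2 = 0 by linarith [hsq]]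
      norm_num
    have segcausal : L.IsCausalCurve (fun s => p + s • (q - p)) 0 1 := by
      refine ⟨zero_le_one, Continuous.continuousOn (by continuity), ?_⟩
      intro s t hs ht' hst
      rw [hcausal]
      simp only [mcausal, seg_def]
      constructor
      · nlinarith [mul_nonneg (sub_nonneg.mpr hst.le) hpq.1]
      · nlinarith [hpq.2, sq_nonneg (t - s)]
    have hg0 : (fun s : ℝ => p + s • (q - p)) 0 = p := by simp
    have hg1 : (fun s : ℝ => p + s • (q - p)) 1 = q := by simp
    have htau0 : L.tau p q = 0 := by
      unfold LPLS.tau; rw [hell0]; simp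
    have hmax : L.IsMaximizer (fun s => p + s • (q - p)) 0 1 := by
      refine ⟨segcausal, le_antisymm ?_ ?_⟩
      · rw [hg0, hg1, htau0]
        have h := len_le_tau L (fun s => p + s • (q - p)) 0 1 zero_lt_one
        simp only [zero_smul, add_zero, one_smul, add_sub_cancel] at h
        rwa [htau0] at h
      · rw [hg0, hg1, htau0]
        exact len_nonneg L _ 0 1
    have hnull : L.IsNullOn (fun s => p + s • (q - p)) 0 1 := by
      intro s t hs ht' hst hcontra
      rw [hchron] at hcontra
      simp only [mchron, seg_def] at hcontra
      obtain ⟨h1, h2⟩ := hcontra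
      nlinarith [hsq, sq_nonneg (t - s)]
    refine ⟨⟨hmax, hnull⟩, ?_⟩
    intro γ hgmax hγ0 hγ1
    have hcc := hgmax.1
    have hps : ∀ s ∈ Set.Icc (0:ℝ) 1, 0 ≤ L.ell p (γ s) := by
      intro s hs
      rcases eq_or_lt_of_le hs.1 with h | h
      · rw [← h, hγ0]; exact L.refl_nonneg p
      · have h2 := hcc.2.2 (Set.left_mem_Icc.mpr zero_le_one) hs h
        rwa [hγ0] at h2
    have hsq' : ∀ s ∈ Set.Icc (0:ℝ) 1, 0 ≤ L.ell (γ s) q := by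
      intro s hs
      rcases eq_or_lt_of_le hs.2 with h | h
      · rw [h, hγ1]; exact L.refl_nonneg q
      · have h2 := hcc.2.2 hs (Set.right_mem_Icc.mpr zero_le_one) h
        rwa [hγ1] at h2
    have key : ∀ s ∈ Set.Icc (0:ℝ) 1, L.ell p (γ s) = 0 ∧ L.ell (γ s) q = 0 := by
      intro s hs
      have htri := L.rev_tri p (γ s) q
      rw [hell0] at htri
      exact ⟨ereal_left_zero (hps s hs) (hsq' s hs) htri,
             ereal_right_zero (hps s hs) (hsq' s hs) htri⟩
    have hne' : q.1 - p.1 ≠ 0 := ne_of_gt ht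
    constructor
    · intro s hs
      have h1 := mell_null (p := p) (q := γ s) (by rw [← hL]; exact (key s hs).1)
      have h2 := mell_null (p := γ s) (q := q) (by rw [← hL]; exact (key s hs).2)
      set m := γ s with hm
      refine ⟨(m.1 - p.1) / (q.1 - p.1), ⟨div_nonneg ?_ ht.le, (div_le_one ht).mpr ?_⟩, ?_⟩
      · linarith [h1.1.1]
      · linarith [h2.1.1]
      · have h3 : ((m.2 - p.2) + (q.2 - m.2)) ^ 2 = ((m.1 - p.1) + (q.1 - m.1)) ^ 2 := by
          linear_combination hsq
        have hbc := null_mid h1.2 h2.2 h3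
        rw [seg_def]
        refine Prod.ext_iff.mpr ⟨?_, ?_⟩
        · field_simp
          ring
        · field_simp
          linear_combination hbc
    · intro s t hs ht' hst hcontra
      have h1 := (key t ht').1
      have htri := L.rev_tri p (γ s) (γ t)
      rw [h1] at htri
      have hmid : L.ell (γ s) (γ t) ≤ 0 := by
        calc L.ell (γ s) (γ t) = 0 + L.ell (γ s) (γ t) := (zero_add _).symm
        _ ≤ L.ell p (γ s) + L.ell (γ s) (γ t) := add_le_add_left (hps s hs) _
        _ ≤ 0 := htri
      have hcontra' : 0 < L.ell (γ s) (γ t) := hcontra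
      exact absurd (lt_of_lt_of_le hcontra' hmid) (lt_irrefl 0)
  · -- part (b)
    intro x z γ hgmax hγ0 hγ1 htpos
    have hellpos : 0 < L.ell x z := by
      unfold LPLS.tau at htpos
      exact (lt_max_iff.mp htpos).resolve_left (lt_irrefl 0)
    have hxz : mchron x z := (hchron x z).mp hellpos
    refine ⟨hxz, ?_⟩
    intro s t hs hst htl
    obtain ⟨h1, h2⟩ := hxz
    simp only [mchron, seg_def]
    constructor
    · nlinarith [mul_pos (sub_pos.mpr hst) h1]
    · nlinarith [mul_pos (mul_pos (sub_pos.mpr hst) (sub_pos.mpr hst)) (sub_pos.mpr h2)]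
  · -- part (c)
    intro x y z hxy hyz h0 hne
    have hcd : (z.2 - y.2) ^ 2 = (z.1 - y.1) ^ 2 := by
      unfold mtau at h0
      rw [if_pos hyz] at h0
      have h2 := Real.sqrt_eq_zero'.mp h0
      linarith [hyz.2]
    have hc : 0 < z.1 - y.1 := by
      rcases lt_or_eq_of_le hyz.1 with h | h
      · exact h
      · exfalso
        apply hne
        have hd2 : (z.2 - y.2) ^ 2 = 0 := by rw [hcd, ← h]; ring
        have hd := pow_eq_zero_iff (n := 2) (by norm_num) |>.mp hd2
        exact Prod.ext_iff.mpr ⟨by linarith, by linarith⟩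
    have ha : 0 < y.1 - x.1 := hxy.1
    have hb2 : (y.2 - x.2) ^ 2 * (z.2 - y.2) ^ 2 < (y.1 - x.1) ^ 2 * (z.1 - y.1) ^ 2 := by
      nlinarith [mul_pos hc hc, hxy.2, hcd, sq_nonneg (y.2 - x.2)]
    have h5 : (y.2 - x.2) * (z.2 - y.2) < (y.1 - x.1) * (z.1 - y.1) := by
      nlinarith [hb2, mul_pos ha hc]
    have hcxz : mcausal x z := by
      refine ⟨by linarith, ?_⟩
      nlinarith [h5, hxy.2, hcd]
    have hcxy : mcausal x y := ⟨hxy.1.le, hxy.2.le⟩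
    unfold mtau
    rw [if_pos hcxy, if_pos hcxz]
    apply Real.sqrt_lt_sqrt
    · nlinarith [hxy.2]
    · nlinarith [h5, hcd]
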